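/- Existence and uniqueness of θ* for MCP/ℓ₂: Let D = diag(d₁,…,dₙ) with dᵢ > 0, α, β, λ > 0 with β > α·d_max², and x ∈ ℝⁿ. The function G(θ) = β²Σᵢ [dᵢxᵢ/(θ(β − αdᵢ²) + αβλdᵢ²)]² is convex and monotonically decreasing on ℝ₊, and there exists a unique θ* ∈ (0, βλ] with G(θ*) = 1 if and only if ‖D⁻¹x‖₂ > αλ and ‖Dx‖₂ ≤ βλ. -/

import Mathlib

open Set

private lemma sumConvexOn' {ι : Type*} (t : Finset ι) (s : Set ℝ) (hs : Convex ℝ s)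
    (f : ι → ℝ → ℝ) (h : ∀ i ∈ t, ConvexOn ℝ s (f i)) :
    ConvexOn ℝ s (fun θ => ∑ i ∈ t, f i θ) := by
  classical
  induction t using Finset.induction with
  | empty => simpa using convexOn_const 0 hs
  | insert a t' hnot ih =>
    simp only [Finset.sum_insert hnot]
    exact (h a (Finset.mem_insert_self a t')).add
      (ih fun i hi => h i (Finset.mem_insert_of_mem hi))

private lemma termConvex' (c a k : ℝ) (hc : 0 < c) (ha : 0 < a) :
    ConvexOn ℝ (Ici 0) (fun θ : ℝ => (k / (θ * c + a))^2) := by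
  have h1 : ConvexOn ℝ ((AffineMap.lineMap a (a + c) : ℝ →ᵃ[ℝ] ℝ) ⁻¹' (Ioi 0))
      ((fun y : ℝ => y ^ (-2 : ℤ)) ∘ (AffineMap.lineMap a (a + c) : ℝ →ᵃ[ℝ] ℝ)) :=
    (convexOn_zpow (-2)).comp_affineMap _
  have hsub : Ici (0:ℝ) ⊆ (AffineMap.lineMap a (a + c) : ℝ →ᵃ[ℝ] ℝ) ⁻¹' (Ioi 0) := by
    intro θ hθ
    simp only [mem_preimage, AffineMap.lineMap_apply, mem_Ioi]
    simp only [vsub_eq_sub, vadd_eq_add, smul_eq_mul]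
    nlinarith [mem_Ici.mp hθ]
  have h2 := (h1.subset hsub (convex_Ici 0)).smul (c := k^2) (sq_nonneg k)
  refine h2.congr fun θ hθ => ?_
  simp only [Function.comp_apply, AffineMap.lineMap_apply, vsub_eq_sub, vadd_eq_add,
    smul_eq_mul, zpow_neg]
  rw [div_pow, show a + c - a = c by ring, div_eq_mul_inv]
  rfl

private lemma termMono (c a k : ℝ) (hc : 0 < c) (ha : 0 < a) {θ₁ θ₂ : ℝ}
    (h0 : 0 ≤ θ₁) (h12 : θ₁ ≤ θ₂) :
    (k / (θ₂ * c + a))^2 ≤ (k / (θ₁ * c + a))^2 := by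
  have hd1 : 0 < θ₁ * c + a := by nlinarith
  have hd2 : θ₁ * c + a ≤ θ₂ * c + a := by nlinarith
  rw [div_pow, div_pow]
  have hk2 := sq_nonneg k
  gcongr

private lemma termStrictMono (c a k : ℝ) (hc : 0 < c) (ha : 0 < a) (hk : k ≠ 0) {θ₁ θ₂ : ℝ}
    (h0 : 0 ≤ θ₁) (h12 : θ₁ < θ₂) :
    (k / (θ₂ * c + a))^2 < (k / (θ₁ * c + a))^2 := by
  have hd1 : 0 < θ₁ * c + a := by nlinarith
  have hd2 : θ₁ * c + a < θ₂ * c + a := by nlinarith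
  rw [div_pow, div_pow]
  apply div_lt_div_of_pos_left (by positivity) (by positivity)
  nlinarith


/-- Existence and uniqueness of `θ*` for MCP/ℓ₂: with `β > α·d_max²`, the function
`G(θ) = β²Σᵢ [dᵢxᵢ/(θ(β − αdᵢ²) + αβλdᵢ²)]²` is convex and monotonically
decreasing on `ℝ₊`, and there is a unique `θ* ∈ (0, βλ]` with `G(θ*) = 1` if and
only if `‖D⁻¹x‖₂ > αλ` and `‖Dx‖₂ ≤ βλ`. -/
theorem stmt_13 (n : ℕ) (d x : Fin n → ℝ) (hd : ∀ i, 0 < d i) (α β lam : ℝ)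
    (hα : 0 < α) (hβ : 1 < β) (hlam : 0 < lam)
    (hβd : ∀ i, α * (d i)^2 < β) :
    ConvexOn ℝ (Set.Ici (0:ℝ))
      (fun θ : ℝ =>
        β^2 * ∑ i, (d i * x i / (θ * (β - α * (d i)^2) + α * β * lam * (d i)^2))^2) ∧
    AntitoneOn
      (fun θ : ℝ =>
        β^2 * ∑ i, (d i * x i / (θ * (β - α * (d i)^2) + α * β * lam * (d i)^2))^2)
      (Set.Ici (0:ℝ)) ∧
    ((∃! θ : ℝ, θ ∈ Set.Ioc (0:ℝ) (β * lam) ∧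
        β^2 * ∑ i, (d i * x i / (θ * (β - α * (d i)^2) + α * β * lam * (d i)^2))^2 = 1) ↔
      (α * lam < Real.sqrt (∑ i, (x i / d i)^2) ∧
       Real.sqrt (∑ i, (d i * x i)^2) ≤ β * lam)) := by
  have hβ0 : (0:ℝ) < β := by linarith
  set F : ℝ → ℝ := fun θ : ℝ =>
    β^2 * ∑ i, (d i * x i / (θ * (β - α * (d i)^2) + α * β * lam * (d i)^2))^2 with hFdef
  have hc : ∀ i, 0 < β - α * (d i)^2 := fun i => by linarith [hβd i]
  have ha : ∀ i, 0 < α * β * lam * (d i)^2 := fun i => by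
    have := (hd i); positivity
  -- Convexity
  have hconv : ConvexOn ℝ (Ici 0) F := by
    have := (sumConvexOn' Finset.univ (Ici 0) (convex_Ici 0)
      (fun i θ => (d i * x i / (θ * (β - α * (d i)^2) + α * β * lam * (d i)^2))^2)
      (fun i _ => termConvex' _ _ _ (hc i) (ha i))).smul (c := β^2) (sq_nonneg β)
    simpa [hFdef, smul_eq_mul] using this
  -- Antitonicity
  have hanti : AntitoneOn F (Ici 0) := by
    intro θ₁ h1 θ₂ _ h12
    simp only [hFdef]
    gcongr β^2 * ?_
    exact Finset.sum_le_sum fun i _ => termMono _ _ _ (hc i) (ha i) (mem_Ici.mp h1) h12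
  -- strict antitonicity given a nonzero coordinate
  have hstrict : (∃ i, x i ≠ 0) → ∀ θ₁ θ₂ : ℝ, 0 ≤ θ₁ → θ₁ < θ₂ → F θ₂ < F θ₁ := by
    rintro ⟨i0, hi0⟩ θ₁ θ₂ h0 h12
    simp only [hFdef]
    apply mul_lt_mul_of_pos_left _ (by positivity)
    apply Finset.sum_lt_sum
      (fun i _ => termMono _ _ _ (hc i) (ha i) h0 h12.le)
    exact ⟨i0, Finset.mem_univ i0,
      termStrictMono _ _ _ (hc i0) (ha i0) (mul_ne_zero (hd i0).ne' hi0) h0 h12⟩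
  -- value at 0
  have hF0 : F 0 = (∑ i, (x i / d i)^2) / (α * lam)^2 := by
    simp only [hFdef, Finset.mul_sum, Finset.sum_div]
    refine Finset.sum_congr rfl fun i _ => ?_
    have hdi := (hd i).ne'
    field_simp
    ring
  -- value at β*lam
  have hFb : F (β * lam) = (∑ i, (d i * x i)^2) / (β * lam)^2 := by
    simp only [hFdef, Finset.mul_sum, Finset.sum_div]
    refine Finset.sum_congr rfl fun i _ => ?_
    have h1 : β * lam * (β - α * (d i)^2) + α * β * lam * (d i)^2 = β^2 * lam := by ring
    rw [h1]
    field_simp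
  have hA : (α * lam < Real.sqrt (∑ i, (x i / d i)^2)) ↔ 1 < F 0 := by
    rw [hF0, lt_div_iff₀ (by positivity), one_mul]
    exact Real.lt_sqrt (by positivity)
  have hB : (Real.sqrt (∑ i, (d i * x i)^2) ≤ β * lam) ↔ F (β * lam) ≤ 1 := by
    rw [hFb, div_le_one (by positivity)]
    exact Real.sqrt_le_left (by positivity)
  refine ⟨hconv, hanti, ?_⟩
  constructor
  · rintro ⟨θ, ⟨hθmem, hθeq⟩, -⟩
    have hθF : F θ = 1 := hθeq
    have hx : ∃ i, x i ≠ 0 := by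
      by_contra h
      push_neg at h
      simp only [hFdef] at hθF
      simp [h] at hθF
    refine ⟨hA.mpr ?_, hB.mpr ?_⟩
    · calc 1 = F θ := hθF.symm
        _ < F 0 := hstrict hx 0 θ le_rfl hθmem.1
    · calc F (β*lam) ≤ F θ := hanti (mem_Ici.mpr hθmem.1.le)
            (mem_Ici.mpr (by positivity)) hθmem.2
        _ = 1 := hθF
  · rintro ⟨h1, h2⟩
    have hF0gt : 1 < F 0 := hA.mp h1
    have hFble : F (β*lam) ≤ 1 := hB.mp h2
    have hx : ∃ i, x i ≠ 0 := by
      by_contra h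
      push_neg at h
      rw [hF0] at hF0gt
      simp [h] at hF0gt
      linarith
    have hcont : ContinuousOn F (Icc 0 (β*lam)) := by
      simp only [hFdef]
      apply ContinuousOn.mul continuousOn_const
      apply continuousOn_finset_sum
      intro i _
      apply ContinuousOn.pow
      apply ContinuousOn.div continuousOn_const
      · exact ((continuous_id.mul continuous_const).add continuous_const).continuousOn
      · intro θ hθ
        have h0 : 0 ≤ θ := hθ.1
        exact ne_of_gt (by nlinarith [hc i, ha i])
    have hsub := intermediate_value_Icc' (by positivity : (0:ℝ) ≤ β*lam) hcont
    obtain ⟨θ, hθIcc, hθeq⟩ := hsub ⟨hFble, hF0gt.le⟩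
    have hθpos : 0 < θ := by
      rcases eq_or_lt_of_le hθIcc.1 with h|h
      · rw [← h] at hθeq
        rw [hθeq] at hF0gt
        exact absurd hF0gt (lt_irrefl 1)
      · exact h
    refine ⟨θ, ⟨⟨hθpos, hθIcc.2⟩, hθeq⟩, ?_⟩
    rintro θ' ⟨⟨h1', h2'⟩, heq'⟩
    have heqF : F θ' = 1 := heq'
    by_contra hne
    rcases lt_or_gt_of_ne hne with hlt|hlt
    · have := hstrict hx θ' θ h1'.le hlt
      rw [hθeq, heqF] at this
      exact lt_irrefl 1 this
    · have := hstrict hx θ θ' hθpos.le hlt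
      rw [hθeq, heqF] at this
      exact lt_irrefl 1 this
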